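/- Elementary variational formula for exponential integrals (finite case): for a probability mass function μ on a finite set S and any function g : S → ℝ, log ∑_x e^{g(x)} μ(x) equals the supremum over all probability mass functions θ on S of (∑_x g(x) θ(x) − D(θ‖μ)), where D(θ‖μ) = ∑_{x : θ(x)>0} θ(x) log(θ(x)/μ(x)) if θ is absolutely continuous with respect to μ and +∞ otherwise. -/

import Mathlib

open Finset Real
open Classical

/-- Elementary variational formula for exponential integrals (finite case):
log ∑_x e^{g(x)} μ(x) = sup over pmfs θ of (∑_x g(x)θ(x) - D(θ‖μ)),
where D(θ‖μ) = +∞ when θ is not absolutely continuous w.r.t. μ. -/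
theorem log_exp_integral_eq_iSup {S : Type} [Fintype S] [Nonempty S]
    (μ : S → ℝ) (g : S → ℝ)
    (hμ0 : ∀ x, 0 ≤ μ x) (hμ1 : ∑ x, μ x = 1) :
    (Real.log (∑ x, Real.exp (g x) * μ x) : EReal) =
      ⨆ θ : {θ : S → ℝ // (∀ x, 0 ≤ θ x) ∧ ∑ x, θ x = 1},
        ((∑ x, g x * θ.1 x : ℝ) : EReal) -
          (if ∀ x, μ x = 0 → θ.1 x = 0 then
            ((∑ x ∈ Finset.univ.filter (fun x => 0 < θ.1 x),
                θ.1 x * Real.log (θ.1 x / μ x) : ℝ) : EReal)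
          else ⊤) := by
  set Z : ℝ := ∑ x, Real.exp (g x) * μ x with hZdef
  have hZterm : ∀ x : S, 0 ≤ Real.exp (g x) * μ x := fun x =>
    mul_nonneg (Real.exp_pos _).le (hμ0 x)
  have hex : ∃ x : S, 0 < μ x := by
    by_contra h
    push_neg at h
    have : ∀ x : S, μ x = 0 := fun x => le_antisymm (h x) (hμ0 x)
    simp [this] at hμ1
  have hZ : 0 < Z := by
    obtain ⟨x, hx⟩ := hex
    exact Finset.sum_pos' (fun i _ => hZterm i)
      ⟨x, Finset.mem_univ x, mul_pos (Real.exp_pos _) hx⟩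
  apply le_antisymm
  · -- attained at θ* = exp(g) μ / Z
    set θs : S → ℝ := fun x => Real.exp (g x) * μ x / Z with hθsdef
    have hθs0 : ∀ x, 0 ≤ θs x := fun x => div_nonneg (hZterm x) hZ.le
    have hθs1 : ∑ x, θs x = 1 := by
      rw [hθsdef, ← Finset.sum_div]
      exact div_self hZ.ne'
    have hAC : ∀ x, μ x = 0 → θs x = 0 := by
      intro x hx; simp [hθsdef, hx]
    have hval :
        ((∑ x, g x * θs x : ℝ) : EReal) -
          ((∑ x ∈ Finset.univ.filter (fun x => 0 < θs x),
              θs x * Real.log (θs x / μ x) : ℝ) : EReal)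
          = ((Real.log Z : ℝ) : EReal) := by
      rw [← EReal.coe_sub, EReal.coe_eq_coe_iff]
      have hmem : ∀ x ∈ Finset.univ.filter (fun x => 0 < θs x), 0 < μ x := by
        intro x hx
        rw [Finset.mem_filter] at hx
        rcases (hμ0 x).lt_or_eq with h | h
        · exact h
        · exfalso; rw [hAC x h.symm] at hx; exact lt_irrefl 0 hx.2
      have hlog : ∀ x ∈ Finset.univ.filter (fun x => 0 < θs x),
          θs x * Real.log (θs x / μ x) = θs x * (g x - Real.log Z) := by
        intro x hx
        have hμx := hmem x hx
        have : θs x / μ x = Real.exp (g x) / Z := by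
          field_simp [hθsdef]
          show Real.exp (g x) * μ x / Z * Z = μ x * Real.exp (g x)
          rw [div_mul_cancel₀ _ hZ.ne']; ring
        rw [this, Real.log_div (Real.exp_pos _).ne' hZ.ne', Real.log_exp]
      rw [Finset.sum_congr rfl hlog]
      have hsub : ∑ x, g x * θs x
          = ∑ x ∈ Finset.univ.filter (fun x => 0 < θs x), g x * θs x := by
        refine (Finset.sum_subset (Finset.filter_subset _ _) ?_).symm
        intro x _ hx
        rw [Finset.mem_filter] at hx
        have : θs x = 0 := le_antisymm (by push_neg at hx; exact hx (Finset.mem_univ x)) (hθs0 x)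
        simp [this]
      have hsum1 : ∑ x ∈ Finset.univ.filter (fun x => 0 < θs x), θs x = 1 := by
        rw [← hθs1]
        refine Finset.sum_subset (Finset.filter_subset _ _) ?_
        intro x _ hx
        rw [Finset.mem_filter] at hx
        exact le_antisymm (by push_neg at hx; exact hx (Finset.mem_univ x)) (hθs0 x)
      rw [hsub, ← Finset.sum_sub_distrib]
      have : ∀ x ∈ Finset.univ.filter (fun x => 0 < θs x),
          g x * θs x - θs x * (g x - Real.log Z) = θs x * Real.log Z := by
        intro x _; ring
      rw [Finset.sum_congr rfl this, ← Finset.sum_mul, hsum1, one_mul]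
    calc ((Real.log Z : ℝ) : EReal)
        = ((∑ x, g x * θs x : ℝ) : EReal) -
            (if ∀ x, μ x = 0 → θs x = 0 then
              ((∑ x ∈ Finset.univ.filter (fun x => 0 < θs x),
                  θs x * Real.log (θs x / μ x) : ℝ) : EReal)
            else ⊤) := by rw [if_pos hAC, hval]
      _ ≤ _ := le_iSup (fun θ : {θ : S → ℝ // (∀ x, 0 ≤ θ x) ∧ ∑ x, θ x = 1} =>
            ((∑ x, g x * θ.1 x : ℝ) : EReal) -
              (if ∀ x, μ x = 0 → θ.1 x = 0 then
                ((∑ x ∈ Finset.univ.filter (fun x => 0 < θ.1 x),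
                    θ.1 x * Real.log (θ.1 x / μ x) : ℝ) : EReal)
              else ⊤)) ⟨θs, hθs0, hθs1⟩
  · refine iSup_le ?_
    rintro ⟨θ, hθ0, hθ1⟩
    by_cases hAC : ∀ x, μ x = 0 → θ x = 0
    · rw [if_pos hAC, ← EReal.coe_sub, EReal.coe_le_coe_iff]
      set T := Finset.univ.filter (fun x => 0 < θ x) with hT
      have hmemT : ∀ x ∈ T, 0 < θ x := by
        intro x hx; rw [hT, Finset.mem_filter] at hx; exact hx.2
      have hmemμ : ∀ x ∈ T, 0 < μ x := by
        intro x hx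
        rcases (hμ0 x).lt_or_eq with h | h
        · exact h
        · exact absurd (hAC x h.symm) (hmemT x hx).ne'
      have hzero : ∀ x ∈ Finset.univ, x ∉ T → θ x = 0 := by
        intro x _ hx
        rw [hT, Finset.mem_filter] at hx
        push_neg at hx
        exact le_antisymm (hx (Finset.mem_univ x)) (hθ0 x)
      have hsumT : ∑ x ∈ T, θ x = 1 := by
        rw [← hθ1]
        exact Finset.sum_subset (Finset.filter_subset _ _) (fun x hx h => hzero x hx h)
      have hsubg : ∑ x, g x * θ x = ∑ x ∈ T, g x * θ x := by
        refine (Finset.sum_subset (Finset.filter_subset _ _) ?_).symm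
        intro x hx h; rw [hzero x hx h]; ring
      have hpt : ∀ x ∈ T, g x * θ x - θ x * Real.log (θ x / μ x)
          ≤ Real.exp (g x) * μ x / Z - θ x + θ x * Real.log Z := by
        intro x hx
        have hθx := hmemT x hx
        have hμx := hmemμ x hx
        have key : Real.log (Real.exp (g x) * μ x / (θ x * Z))
            ≤ Real.exp (g x) * μ x / (θ x * Z) - 1 :=
          Real.log_le_sub_one_of_pos
            (div_pos (mul_pos (Real.exp_pos _) hμx) (mul_pos hθx hZ))
        have hexpand : Real.log (Real.exp (g x) * μ x / (θ x * Z))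
            = g x - Real.log (θ x / μ x) - Real.log Z := by
          rw [Real.log_div (mul_pos (Real.exp_pos _) hμx).ne' (mul_pos hθx hZ).ne',
            Real.log_mul (Real.exp_pos _).ne' hμx.ne',
            Real.log_mul hθx.ne' hZ.ne', Real.log_exp,
            Real.log_div hθx.ne' hμx.ne']
          ring
        rw [hexpand] at key
        have := mul_le_mul_of_nonneg_left key hθx.le
        have hne : θ x * (Real.exp (g x) * μ x / (θ x * Z)) = Real.exp (g x) * μ x / Z := by
          field_simp
        nlinarith [this, hne]
      calc ∑ x, g x * θ x - ∑ x ∈ T, θ x * Real.log (θ x / μ x)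
          = ∑ x ∈ T, (g x * θ x - θ x * Real.log (θ x / μ x)) := by
            rw [hsubg, Finset.sum_sub_distrib]
        _ ≤ ∑ x ∈ T, (Real.exp (g x) * μ x / Z - θ x + θ x * Real.log Z) :=
            Finset.sum_le_sum hpt
        _ = (∑ x ∈ T, Real.exp (g x) * μ x) / Z - 1 + Real.log Z := by
            rw [Finset.sum_add_distrib, Finset.sum_sub_distrib, ← Finset.sum_div,
              hsumT, ← Finset.sum_mul, hsumT, one_mul]
        _ ≤ Z / Z - 1 + Real.log Z := by
            have : ∑ x ∈ T, Real.exp (g x) * μ x ≤ Z :=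
              Finset.sum_le_sum_of_subset_of_nonneg (Finset.filter_subset _ _)
                (fun i _ _ => hZterm i)
            have h2 := (div_le_div_iff_of_pos_right hZ).mpr this
            linarith
        _ = Real.log Z := by rw [div_self hZ.ne']; ring
    · rw [if_neg hAC, EReal.sub_top]
      exact bot_le
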